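/- arXiv:0907.0472 — 2 statements merged into one kernel-verified Lean document; each statement's English description precedes it below -/
import Mathlib

section
/- For Hermitian positive semidefinite matrices K ⪯ K̄ and Hermitian positive definite matrices N, Ñ of the same size, log det(K+N) − log det(K+N+Ñ) ≤ log det(K̄+N) − log det(K̄+N+Ñ). -/
open Matrix ComplexOrder

namespace LogDetMonoAux

open scoped MatrixOrder

variable {n : ℕ}

lemma det_real_pos {A : Matrix (Fin n) (Fin n) ℂ} (hA : A.PosDef) :
    A.det = (A.det.re : ℂ) ∧ 0 < A.det.re := by
  have h := hA.det_pos
  rw [Complex.lt_def] at h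
  refine ⟨Complex.ext (by simp) ?_, by simpa using h.1⟩
  simp [← h.2]

lemma sqrt_facts {A : Matrix (Fin n) (Fin n) ℂ} (hA : A.PosDef) :
    (CFC.sqrt A).IsHermitian ∧ CFC.sqrt A * CFC.sqrt A = A ∧
      (CFC.sqrt A).det ≠ 0 := by
  refine ⟨(CFC.sqrt_nonneg A).posSemidef.1, CFC.sqrt_mul_sqrt_self A hA.posSemidef.nonneg, fun h => ?_⟩
  exact hA.det_pos.ne' (by rw [← CFC.sqrt_mul_sqrt_self A hA.posSemidef.nonneg, det_mul, h, mul_zero])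

lemma one_le_det_one_add {R : Matrix (Fin n) (Fin n) ℂ} (hR : R.PosSemidef) :
    ∃ r : ℝ, 1 ≤ r ∧ (1 + R).det = (r : ℂ) := by
  have hH := hR.1
  set U : Matrix (Fin n) (Fin n) ℂ := (hH.eigenvectorUnitary : Matrix (Fin n) (Fin n) ℂ) with hUdef
  have hU : U * star U = 1 := (Matrix.mem_unitaryGroup_iff).mp hH.eigenvectorUnitary.2
  refine ⟨∏ i, (1 + hH.eigenvalues i), ?_, ?_⟩
  · have : (1:ℝ) = ∏ _i : Fin n, (1:ℝ) := by simp
    rw [this]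
    apply Finset.prod_le_prod
    · intro i _; norm_num
    · intro i _; have := hR.eigenvalues_nonneg i; linarith
  · set D : Matrix (Fin n) (Fin n) ℂ := diagonal (RCLike.ofReal ∘ hH.eigenvalues) with hD
    have key : 1 + R = U * ((1 : Matrix (Fin n) (Fin n) ℂ) + D) * star U := by
      rw [mul_add, mul_one, add_mul, hU]
      congr 1
      exact hH.spectral_theorem
    have hUU : U.det * (star U).det = 1 := by rw [← det_mul, hU, det_one]
    rw [key, det_mul, det_mul]
    have : U.det * ((1 : Matrix (Fin n) (Fin n) ℂ) + D).det * (star U).det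
        = ((1 : Matrix (Fin n) (Fin n) ℂ) + D).det * (U.det * (star U).det) := by ring
    rw [this, hUU, mul_one, hD, ← diagonal_one, diagonal_add, det_diagonal]
    push_cast
    simp [RCLike.ofReal]

lemma det_re_le_det_re_add {P Q : Matrix (Fin n) (Fin n) ℂ} (hP : P.PosDef)
    (hQ : Q.PosSemidef) : P.det.re ≤ (P + Q).det.re := by
  obtain ⟨hSH, hSS, hdS⟩ := sqrt_facts hP
  set S : Matrix (Fin n) (Fin n) ℂ := CFC.sqrt P with hSdef
  have hSinv : S * S⁻¹ = 1 := mul_nonsing_inv S hdS.isUnit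
  have hinvS : S⁻¹ * S = 1 := nonsing_inv_mul S hdS.isUnit
  have key : P + Q = S * ((1 : Matrix (Fin n) (Fin n) ℂ) + S⁻¹ * Q * S⁻¹) * S := by
    rw [mul_add, mul_one, add_mul, hSS]
    congr 1
    have e : S * (S⁻¹ * Q * S⁻¹) * S = (S * S⁻¹) * Q * (S⁻¹ * S) := by
      simp only [Matrix.mul_assoc]
    rw [e, hSinv, hinvS, Matrix.one_mul, Matrix.mul_one]
  have hR : (S⁻¹ * Q * S⁻¹).PosSemidef := by
    have := hQ.conjTranspose_mul_mul_same (S⁻¹)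
    rwa [hSH.inv.eq] at this
  obtain ⟨r, hr1, hrdet⟩ := one_le_det_one_add hR
  obtain ⟨hPre, hPpos⟩ := det_real_pos hP
  have hdet : (P + Q).det = ((P.det.re * r : ℝ) : ℂ) := by
    rw [key, det_mul, det_mul, hrdet]
    rw [show S.det * ((r:ℂ)) * S.det = (S.det * S.det) * (r:ℂ) by ring, ← det_mul, hSS, hPre]
    norm_cast
  rw [hdet]
  simp only [Complex.ofReal_re]
  nlinarith

lemma posDef_conj {A C : Matrix (Fin n) (Fin n) ℂ} (hA : A.PosDef) (hC : C.det ≠ 0) :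
    (Cᴴ * A * C).PosDef := by
  refine PosDef.of_dotProduct_mulVec_pos (isHermitian_conjTranspose_mul_mul C hA.1) fun x hx => ?_
  have hCx : C *ᵥ x ≠ 0 := by
    have hinj : Function.Injective C.mulVec :=
      mulVec_injective_iff_isUnit.mpr ((isUnit_iff_isUnit_det C).mpr hC.isUnit)
    intro hzero
    exact hx (hinj (by simpa using hzero))
  simpa only [star_mulVec, dotProduct_mulVec, vecMul_vecMul] using hA.dotProduct_mulVec_pos hCx

lemma inv_sub_one_psd {M : Matrix (Fin n) (Fin n) ℂ} (hM : M.PosDef)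
    (h : ((1 : Matrix (Fin n) (Fin n) ℂ) - M).PosSemidef) :
    (M⁻¹ - 1).PosSemidef := by
  obtain ⟨hSH, hSS, hdS⟩ := sqrt_facts hM
  set S : Matrix (Fin n) (Fin n) ℂ := CFC.sqrt M with hSdef
  have hSinv : S * S⁻¹ = 1 := mul_nonsing_inv S hdS.isUnit
  have hinvS : S⁻¹ * S = 1 := nonsing_inv_mul S hdS.isUnit
  have hMinv : M⁻¹ = S⁻¹ * S⁻¹ := by rw [← hSS, Matrix.mul_inv_rev]
  have key : M⁻¹ - 1 = (S⁻¹)ᴴ * ((1 : Matrix (Fin n) (Fin n) ℂ) - M) * S⁻¹ := by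
    rw [hSH.inv.eq, Matrix.mul_sub, Matrix.mul_one, Matrix.sub_mul, hMinv]
    congr 1
    rw [← hSS]
    have e : S⁻¹ * (S * S) * S⁻¹ = (S⁻¹ * S) * (S * S⁻¹) := by simp only [Matrix.mul_assoc]
    rw [e, hinvS, hSinv, Matrix.one_mul]
  rw [key]
  exact h.conjTranspose_mul_mul_same _

lemma inv_sub_inv_psd {A B : Matrix (Fin n) (Fin n) ℂ} (hA : A.PosDef) (hB : B.PosDef)
    (h : (B - A).PosSemidef) : (A⁻¹ - B⁻¹).PosSemidef := by
  obtain ⟨hTH, hTT, hdT⟩ := sqrt_facts hB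
  set T : Matrix (Fin n) (Fin n) ℂ := CFC.sqrt B with hTdef
  have hTinv : T * T⁻¹ = 1 := mul_nonsing_inv T hdT.isUnit
  have hinvT : T⁻¹ * T = 1 := nonsing_inv_mul T hdT.isUnit
  have hdTi : (T⁻¹).det ≠ 0 := det_ne_zero_of_right_inverse hinvT
  set M : Matrix (Fin n) (Fin n) ℂ := T⁻¹ * A * T⁻¹ with hMdef
  have hM : M.PosDef := by
    have := posDef_conj hA hdTi
    rwa [hTH.inv.eq] at this
  have h1M : ((1 : Matrix (Fin n) (Fin n) ℂ) - M).PosSemidef := by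
    have e : (1 : Matrix (Fin n) (Fin n) ℂ) - M = (T⁻¹)ᴴ * (B - A) * T⁻¹ := by
      rw [hTH.inv.eq, Matrix.mul_sub, Matrix.sub_mul, hMdef]
      congr 1
      rw [← hTT]
      have e2 : T⁻¹ * (T * T) * T⁻¹ = (T⁻¹ * T) * (T * T⁻¹) := by simp only [Matrix.mul_assoc]
      rw [e2, hinvT, hTinv, Matrix.one_mul]
    rw [e]
    exact h.conjTranspose_mul_mul_same _
  have hsub := inv_sub_one_psd hM h1M
  have hMinv : M⁻¹ = T * A⁻¹ * T := by
    rw [hMdef, Matrix.mul_inv_rev, Matrix.mul_inv_rev, nonsing_inv_nonsing_inv T hdT.isUnit,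
      Matrix.mul_assoc]
  have key : A⁻¹ - B⁻¹ = (T⁻¹)ᴴ * (M⁻¹ - 1) * T⁻¹ := by
    rw [hTH.inv.eq, Matrix.mul_sub, Matrix.sub_mul, Matrix.mul_one, hMinv]
    have e1 : T⁻¹ * (T * A⁻¹ * T) * T⁻¹ = (T⁻¹ * T) * A⁻¹ * (T * T⁻¹) := by
      simp only [Matrix.mul_assoc]
    have e2 : B⁻¹ = T⁻¹ * T⁻¹ := by rw [← hTT, Matrix.mul_inv_rev]
    rw [e1, hinvT, hTinv, Matrix.one_mul, Matrix.mul_one, e2]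
  rw [key]
  exact hsub.conjTranspose_mul_mul_same _

lemma det_mul_det_le {A B Nt : Matrix (Fin n) (Fin n) ℂ} (hA : A.PosDef) (hB : B.PosDef)
    (hBA : (B - A).PosSemidef) (hNt : Nt.PosDef) :
    A.det.re * (B + Nt).det.re ≤ B.det.re * (A + Nt).det.re := by
  obtain ⟨hWH, hWW, hdW⟩ := sqrt_facts hNt
  set W : Matrix (Fin n) (Fin n) ℂ := CFC.sqrt Nt with hWdef
  have hWinv : W * W⁻¹ = 1 := mul_nonsing_inv W hdW.isUnit
  have hinvW : W⁻¹ * W = 1 := nonsing_inv_mul W hdW.isUnit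
  -- P = W A⁻¹ W,  Q = W B⁻¹ W
  have hP : (W * A⁻¹ * W).PosSemidef := by
    have := hA.inv.posSemidef.conjTranspose_mul_mul_same W
    rwa [hWH.eq] at this
  have hQ : (W * B⁻¹ * W).PosSemidef := by
    have := hB.inv.posSemidef.conjTranspose_mul_mul_same W
    rwa [hWH.eq] at this
  have hPQ : (W * A⁻¹ * W - W * B⁻¹ * W).PosSemidef := by
    have h1 := inv_sub_inv_psd hA hB hBA
    have := h1.conjTranspose_mul_mul_same W
    have e : Wᴴ * (A⁻¹ - B⁻¹) * W = W * A⁻¹ * W - W * B⁻¹ * W := by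
      rw [hWH.eq, Matrix.mul_sub, Matrix.sub_mul]
    rwa [e] at this
  -- det (X + Nt) = det X * det (1 + W X⁻¹ W) for X PD
  have comp : ∀ (X : Matrix (Fin n) (Fin n) ℂ), X.PosDef →
      (X + Nt).det = X.det * ((1 : Matrix (Fin n) (Fin n) ℂ) + W * X⁻¹ * W).det := by
    intro X hX
    have hXinv : X * X⁻¹ = 1 := mul_nonsing_inv X hX.det_pos.ne'.isUnit
    have key : X + Nt = X * ((1 : Matrix (Fin n) (Fin n) ℂ) + X⁻¹ * (W * W)) := by
      rw [Matrix.mul_add, Matrix.mul_one, ← Matrix.mul_assoc, hXinv, Matrix.one_mul, hWW]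
    have e : ((1 : Matrix (Fin n) (Fin n) ℂ) + X⁻¹ * (W * W)).det
        = ((1 : Matrix (Fin n) (Fin n) ℂ) + W * X⁻¹ * W).det := by
      have c : W⁻¹ * ((1 : Matrix (Fin n) (Fin n) ℂ) + W * X⁻¹ * W) * W
          = (1 : Matrix (Fin n) (Fin n) ℂ) + X⁻¹ * (W * W) := by
        rw [Matrix.mul_add, Matrix.add_mul, Matrix.mul_one, hinvW]
        congr 1
        have e2 : W⁻¹ * (W * X⁻¹ * W) * W = (W⁻¹ * W) * (X⁻¹ * (W * W)) := by
          simp only [Matrix.mul_assoc]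
        rw [e2, hinvW, Matrix.one_mul]
      rw [← c, det_mul, det_mul]
      have hdWi : (W⁻¹).det * W.det = 1 := by rw [← det_mul, hinvW, det_one]
      calc (W⁻¹).det * ((1 : Matrix (Fin n) (Fin n) ℂ) + W * X⁻¹ * W).det * W.det
          = ((1 : Matrix (Fin n) (Fin n) ℂ) + W * X⁻¹ * W).det * ((W⁻¹).det * W.det) := by ring
        _ = _ := by rw [hdWi, mul_one]
    rw [key, det_mul, e]
  have hcompA := comp A hA
  have hcompB := comp B hB
  -- 1 + Q is PD, (1+P) - (1+Q) = P - Q is PSD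
  have h1Q : ((1 : Matrix (Fin n) (Fin n) ℂ) + W * B⁻¹ * W).PosDef :=
    Matrix.PosDef.add_posSemidef Matrix.PosDef.one hQ
  have hmono : ((1 : Matrix (Fin n) (Fin n) ℂ) + W * B⁻¹ * W).det.re
      ≤ ((1 : Matrix (Fin n) (Fin n) ℂ) + W * A⁻¹ * W).det.re := by
    have e : (1 : Matrix (Fin n) (Fin n) ℂ) + W * A⁻¹ * W
        = ((1 : Matrix (Fin n) (Fin n) ℂ) + W * B⁻¹ * W) + (W * A⁻¹ * W - W * B⁻¹ * W) := by
      abel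
    rw [e]
    exact det_re_le_det_re_add h1Q hPQ
  obtain ⟨hAre, hApos⟩ := det_real_pos hA
  obtain ⟨hBre, hBpos⟩ := det_real_pos hB
  obtain ⟨hQre, hQpos⟩ := det_real_pos h1Q
  have h1P : ((1 : Matrix (Fin n) (Fin n) ℂ) + W * A⁻¹ * W).PosDef :=
    Matrix.PosDef.add_posSemidef Matrix.PosDef.one hP
  obtain ⟨hPre, hPpos⟩ := det_real_pos h1P
  have reA : (A + Nt).det.re
      = A.det.re * ((1 : Matrix (Fin n) (Fin n) ℂ) + W * A⁻¹ * W).det.re := by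
    conv_lhs => rw [hcompA, hAre, hPre, ← Complex.ofReal_mul]
    exact Complex.ofReal_re _
  have reB : (B + Nt).det.re
      = B.det.re * ((1 : Matrix (Fin n) (Fin n) ℂ) + W * B⁻¹ * W).det.re := by
    conv_lhs => rw [hcompB, hBre, hQre, ← Complex.ofReal_mul]
    exact Complex.ofReal_re _
  rw [reA, reB]
  nlinarith [mul_le_mul_of_nonneg_left hmono (mul_pos hApos hBpos).le]

end LogDetMonoAux


open LogDetMonoAux in
/-- For Hermitian positive semidefinite matrices `K ⪯ K̄` and Hermitian positive definite
matrices `N, Ñ` of the same size,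
`log det (K+N) − log det (K+N+Ñ) ≤ log det (K̄+N) − log det (K̄+N+Ñ)`. -/
theorem logDet_sub_logDet_mono {n : ℕ} (K Kb N Nt : Matrix (Fin n) (Fin n) ℂ)
    (hK : K.PosSemidef) (hKb : Kb.PosSemidef) (hle : (Kb - K).PosSemidef)
    (hN : N.PosDef) (hNt : Nt.PosDef) :
    Real.log (K + N).det.re - Real.log (K + N + Nt).det.re ≤
      Real.log (Kb + N).det.re - Real.log (Kb + N + Nt).det.re := by
  have hA : (K + N).PosDef := Matrix.PosDef.posSemidef_add hK hN
  have hB : (Kb + N).PosDef := Matrix.PosDef.posSemidef_add hKb hN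
  have hBA : ((Kb + N) - (K + N)).PosSemidef := by
    have e : (Kb + N) - (K + N) = Kb - K := by abel
    rw [e]; exact hle
  have hA' : (K + N + Nt).PosDef := hA.add hNt
  have hB' : (Kb + N + Nt).PosDef := hB.add hNt
  have key := det_mul_det_le hA hB hBA hNt
  have ha := (det_real_pos hA).2
  have hb := (det_real_pos hB).2
  have ha' := (det_real_pos hA').2
  have hb' := (det_real_pos hB').2
  rw [sub_le_sub_iff, ← Real.log_mul ha.ne' hb'.ne', ← Real.log_mul hb.ne' ha'.ne']
  exact Real.log_le_log (mul_pos ha hb') key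
end

section
/- Suppose W is a nonsingular n×n complex matrix, M is Hermitian positive definite, and the equation X + W† X⁻¹ W = M with X = Σ − A†A is obtained from Σ = I − B Σ̃⁻¹ B† after the substitutions M = I − A†A − BB†, W = A†B†, Σ̃ = I − A Σ⁻¹ A†. Then this equation has a Hermitian positive definite solution X if and only if radius(M^{-1/2} W M^{-1/2}) ≤ 1/2. -/
open Matrix ComplexOrder
open scoped MatrixOrder

/-- The numerical radius of a square complex matrix:
`radius(X) = sup_{‖α‖ ≤ 1} |αᴴ X α|`. -/
noncomputable def numRadius {n : ℕ} (X : Matrix (Fin n) (Fin n) ℂ) : ℝ :=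
  sSup {r : ℝ | ∃ α : Fin n → ℂ,
    (∑ i, Complex.normSq (α i)) ≤ 1 ∧ r = ‖star α ⬝ᵥ X.mulVec α‖}

namespace RiccatiAux

open Filter Topology Finset



variable {n : ℕ}

lemma star_dot_self (w : Fin n → ℂ) :
    star w ⬝ᵥ w = ((∑ i, Complex.normSq (w i) : ℝ) : ℂ) := by
  push_cast
  simp only [dotProduct, Pi.star_apply]
  congr 1; funext i
  simp [Complex.star_def, Complex.normSq_eq_conj_mul_self]

lemma herm_shift {S : Matrix (Fin n) (Fin n) ℂ} (hS : S.IsHermitian) (x w : Fin n → ℂ) :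
    star x ⬝ᵥ (S *ᵥ w) = star (S *ᵥ x) ⬝ᵥ w := by
  rw [dotProduct_mulVec, star_mulVec, hS.eq]

lemma herm_form_real {Y : Matrix (Fin n) (Fin n) ℂ} (hY : Y.IsHermitian) (x : Fin n → ℂ) :
    star x ⬝ᵥ (Y *ᵥ x) = (((star x ⬝ᵥ (Y *ᵥ x)).re : ℝ) : ℂ) := by
  have h : star (star x ⬝ᵥ (Y *ᵥ x)) = star x ⬝ᵥ (Y *ᵥ x) := by
    conv_lhs => rw [Matrix.star_dotProduct, star_star, ← herm_shift hY]
  exact ((Complex.conj_eq_iff_re).mp h).symm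

lemma psd_re_nonneg {Y : Matrix (Fin n) (Fin n) ℂ} (hY : Y.PosSemidef) (x : Fin n → ℂ) :
    0 ≤ (star x ⬝ᵥ (Y *ᵥ x)).re := by
  have := hY.dotProduct_mulVec_nonneg x
  rw [Complex.le_def] at this
  simpa using this.1

lemma posSemidef_of_re {Y : Matrix (Fin n) (Fin n) ℂ} (hY : Y.IsHermitian)
    (h : ∀ x, 0 ≤ (star x ⬝ᵥ (Y *ᵥ x)).re) : Y.PosSemidef := by
  refine PosSemidef.of_dotProduct_mulVec_nonneg hY (fun x => ?_)
  rw [herm_form_real hY x, Complex.le_def]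
  simpa using h x

/-- quadratic-form Cauchy–Schwarz for PSD matrices -/
lemma psd_cs {P : Matrix (Fin n) (Fin n) ℂ} (hP : P.PosSemidef) (x y : Fin n → ℂ) :
    ‖star x ⬝ᵥ (P *ᵥ y)‖ ^ 2
      ≤ (star x ⬝ᵥ (P *ᵥ x)).re * (star y ⬝ᵥ (P *ᵥ y)).re := by
  obtain ⟨B, rfl⟩ := CStarAlgebra.nonneg_iff_eq_star_mul_self.mp hP.nonneg
  rw [star_eq_conjTranspose]
  have key : ∀ u v : Fin n → ℂ, star u ⬝ᵥ ((Bᴴ * B) *ᵥ v) = star (B *ᵥ u) ⬝ᵥ (B *ᵥ v) := by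
    intro u v
    rw [← mulVec_mulVec, dotProduct_mulVec, ← star_mulVec]
  rw [key x y, key x x, key y y]
  set u := B *ᵥ x
  set v := B *ᵥ y
  -- transfer to EuclideanSpace
  let u' : EuclideanSpace ℂ (Fin n) := (WithLp.equiv 2 _).symm u
  let v' : EuclideanSpace ℂ (Fin n) := (WithLp.equiv 2 _).symm v
  have hinner : (inner ℂ u' v' : ℂ) = star u ⬝ᵥ v := by
    rw [PiLp.inner_apply]
    simp [dotProduct, u', v', Complex.star_def, mul_comm]
  have hcs := norm_inner_le_norm (𝕜 := ℂ) u' v'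
  have hnorm : ∀ w : Fin n → ℂ, ‖(WithLp.equiv 2 (Fin n → ℂ)).symm w‖ ^ 2 = (star w ⬝ᵥ w).re := by
    intro w
    rw [star_dot_self, Complex.ofReal_re, EuclideanSpace.norm_eq,
      Real.sq_sqrt (by positivity)]
    congr 1; funext i
    rw [Complex.normSq_eq_norm_sq]
    rfl
  have h2 : ‖star u ⬝ᵥ v‖ ≤ ‖u'‖ * ‖v'‖ := by
    rw [← hinner]; exact hcs
  calc ‖star u ⬝ᵥ v‖ ^ 2 ≤ (‖u'‖ * ‖v'‖) ^ 2 := by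
        apply pow_le_pow_left₀ (norm_nonneg _) h2
    _ = (star u ⬝ᵥ u).re * (star v ⬝ᵥ v).re := by
        rw [mul_pow, hnorm u, hnorm v]

lemma psd_form_real {Y : Matrix (Fin n) (Fin n) ℂ} (hY : Y.PosSemidef) (x : Fin n → ℂ) :
    star x ⬝ᵥ (Y *ᵥ x) = (((star x ⬝ᵥ (Y *ᵥ x)).re : ℝ) : ℂ) := herm_form_real hY.1 x

/-- `P ≤ Q` implies `Q⁻¹ ≤ P⁻¹` for positive definite matrices. -/
lemma inv_antitone {P Q : Matrix (Fin n) (Fin n) ℂ} (hP : P.PosDef) (hQ : Q.PosDef)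
    (h : (Q - P).PosSemidef) : (P⁻¹ - Q⁻¹).PosSemidef := by
  refine posSemidef_of_re ((hP.isHermitian.inv).sub (hQ.isHermitian.inv)) (fun x => ?_)
  have hPu : IsUnit P.det := hP.det_pos.ne'.isUnit
  have hQu : IsUnit Q.det := hQ.det_pos.ne'.isUnit
  have hle : ∀ (R S : Matrix (Fin n) (Fin n) ℂ), (S - R).PosSemidef → ∀ y,
      (star y ⬝ᵥ (R *ᵥ y)).re ≤ (star y ⬝ᵥ (S *ᵥ y)).re := by
    intro R S hRS y
    have h2 := psd_re_nonneg hRS y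
    simp only [sub_mulVec, dotProduct_sub, Complex.sub_re] at h2
    linarith
  set y := Q⁻¹ *ᵥ x with hy
  -- star y ⬝ᵥ Q *ᵥ y = star x ⬝ᵥ Q⁻¹ *ᵥ x
  have hQy : Q *ᵥ y = x := by
    rw [hy, mulVec_mulVec, Matrix.mul_nonsing_inv Q hQu, one_mulVec]
  have hPPy : ∀ z, P⁻¹ *ᵥ (P *ᵥ z) = z := by
    intro z
    rw [mulVec_mulVec, Matrix.nonsing_inv_mul P hPu, one_mulVec]
  have e1 : star y ⬝ᵥ (Q *ᵥ y) = star x ⬝ᵥ (Q⁻¹ *ᵥ x) := by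
    rw [hQy, hy, herm_shift hQ.isHermitian.inv x x]
  have e2 : star (P⁻¹ *ᵥ x) ⬝ᵥ (P *ᵥ y) = star x ⬝ᵥ (Q⁻¹ *ᵥ x) := by
    rw [← herm_shift hP.isHermitian.inv x (P *ᵥ y), hPPy y]
  have e3 : star (P⁻¹ *ᵥ x) ⬝ᵥ (P *ᵥ (P⁻¹ *ᵥ x)) = star x ⬝ᵥ (P⁻¹ *ᵥ x) := by
    rw [← herm_shift hP.isHermitian.inv x _, hPPy]
  set a := (star x ⬝ᵥ (Q⁻¹ *ᵥ x)).re with ha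
  set b := (star x ⬝ᵥ (P⁻¹ *ᵥ x)).re with hb
  have ha0 : 0 ≤ a := psd_re_nonneg hQ.posSemidef.inv x
  have hb0 : 0 ≤ b := psd_re_nonneg hP.posSemidef.inv x
  have hreal : star x ⬝ᵥ (Q⁻¹ *ᵥ x) = (a : ℂ) := psd_form_real hQ.posSemidef.inv x
  -- Cauchy-Schwarz
  have hcs := psd_cs hP.posSemidef (P⁻¹ *ᵥ x) y
  rw [e2, e3, hreal] at hcs
  have habs : ‖((a : ℝ) : ℂ)‖ = a := by
    rw [Complex.norm_real, Real.norm_of_nonneg ha0]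
  rw [habs] at hcs
  have hyq : (star y ⬝ᵥ (P *ᵥ y)).re ≤ a := by
    have := hle P Q h y
    rw [e1, hreal] at this
    simpa using this
  have key : a ≤ b := by
    rcases eq_or_lt_of_le ha0 with h0 | h0
    · linarith
    · nlinarith [psd_re_nonneg hP.posSemidef y]
  simp only [sub_mulVec, dotProduct_sub, Complex.sub_re]
  rw [← ha, ← hb]; linarith

/-- `A * Aᴴ` is positive definite when `A` is invertible. -/
lemma mul_conjTranspose_self_posDef {A : Matrix (Fin n) (Fin n) ℂ} (hA : IsUnit A.det) :
    (A * Aᴴ).PosDef := by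
  refine PosDef.of_dotProduct_mulVec_pos (isHermitian_mul_conjTranspose_self A) (fun x hx => ?_)
  have hAH : IsUnit Aᴴ := by
    rw [Matrix.isUnit_iff_isUnit_det, Matrix.det_conjTranspose]
    exact hA.star
  have hinj : Function.Injective (Aᴴ).mulVec := mulVec_injective_iff_isUnit.mpr hAH
  have hne : Aᴴ *ᵥ x ≠ 0 := by
    intro hc
    exact hx (hinj (by simpa using hc))
  have : star x ⬝ᵥ ((A * Aᴴ) *ᵥ x) = star (Aᴴ *ᵥ x) ⬝ᵥ (Aᴴ *ᵥ x) := by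
    rw [← mulVec_mulVec, dotProduct_mulVec, ← conjTranspose_conjTranspose A, ← star_mulVec,
      conjTranspose_conjTranspose]
  rw [this]
  exact dotProduct_star_self_pos_iff.mpr hne




variable {n : ℕ}

lemma dot_sum_left {ι : Type*} (s : Finset ι) (f : ι → Fin n → ℂ) (w : Fin n → ℂ) :
    (∑ j ∈ s, f j) ⬝ᵥ w = ∑ j ∈ s, f j ⬝ᵥ w := by
  simp only [dotProduct, Finset.sum_apply, Finset.sum_mul]
  exact Finset.sum_comm

lemma dot_sum_right {ι : Type*} (s : Finset ι) (w : Fin n → ℂ) (f : ι → Fin n → ℂ) :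
    w ⬝ᵥ (∑ j ∈ s, f j) = ∑ j ∈ s, w ⬝ᵥ f j := by
  simp only [dotProduct, Finset.sum_apply, Finset.mul_sum]
  exact Finset.sum_comm

lemma toeplitz_nonneg {A : Matrix (Fin n) (Fin n) ℂ}
    (hw : ∀ u : Fin n → ℂ, ‖star u ⬝ᵥ (A *ᵥ u)‖ ≤ (1/2) * (star u ⬝ᵥ u).re)
    (N : ℕ) (w : ℕ → Fin n → ℂ) :
    2 * ∑ j ∈ range N, (star (w (j+1)) ⬝ᵥ (A *ᵥ w j)).re
      ≤ ∑ j ∈ range (N+1), (star (w j) ⬝ᵥ (w j)).re := by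
  set L : ℕ := N + 2 with hL
  have hL0 : L ≠ 0 := by omega
  set ζ : ℂ := Complex.exp (2 * Real.pi * Complex.I / L) with hζdef
  have hprim : IsPrimitiveRoot ζ L := Complex.isPrimitiveRoot_exp L hL0
  have hζ0 : ζ ≠ 0 := hprim.ne_zero hL0
  have hζL : ζ ^ (L : ℤ) = 1 := by
    rw [zpow_natCast]; exact hprim.pow_eq_one
  have hζabs : ‖ζ‖ = 1 := by
    have h1 : ‖ζ‖ ^ L = 1 := by
      rw [← norm_pow, hprim.pow_eq_one]
      exact norm_one
    rcases lt_trichotomy (‖ζ‖) 1 with h | h | h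
    · exact absurd h1 (by nlinarith [pow_lt_one₀ (norm_nonneg ζ) h hL0])
    · exact h
    · exact absurd h1 (by nlinarith [one_lt_pow₀ h hL0])
  have rootsum : ∀ d : ℤ, ∑ l ∈ range L, ζ ^ ((l : ℤ) * d) = if (L:ℤ) ∣ d then (L:ℂ) else 0 := by
    intro d
    by_cases hd : (L:ℤ) ∣ d
    · obtain ⟨m, rfl⟩ := hd
      rw [if_pos ⟨m, rfl⟩]
      have he : ∀ l ∈ range L, ζ ^ ((l:ℤ) * ((L:ℤ) * m)) = 1 := by
        intro l _
        rw [show (l:ℤ) * ((L:ℤ)*m) = (L:ℤ) * ((l:ℤ)*m) by ring, _root_.zpow_mul, hζL, _root_.one_zpow]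
      rw [Finset.sum_congr rfl he, Finset.sum_const, card_range, nsmul_eq_mul, mul_one]
    · rw [if_neg hd]
      have hne : ζ ^ d ≠ 1 := fun hc => hd ((hprim.zpow_eq_one_iff_dvd d).mp hc)
      have he : ∀ l : ℕ, ζ ^ ((l:ℤ) * d) = (ζ ^ d) ^ l := by
        intro l
        rw [mul_comm, _root_.zpow_mul, zpow_natCast]
      simp_rw [he]
      rw [geom_sum_eq hne L]
      have hpL : (ζ ^ d) ^ L = 1 := by
        rw [← zpow_natCast (ζ ^ d) L, ← _root_.zpow_mul, mul_comm, _root_.zpow_mul, hζL, _root_.one_zpow]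
      rw [hpL, sub_self, zero_div]
  -- the test vectors
  set v : ℕ → Fin n → ℂ := fun l => ∑ j ∈ range (N+1), ζ ^ ((l:ℤ)*(j:ℕ)) • w j with hv
  have starz : ∀ e : ℤ, star (ζ ^ e) = ζ ^ (-e) := by
    intro e
    rw [star_zpow₀, _root_.zpow_neg, ← _root_.inv_zpow]
    congr 1
    rw [Complex.inv_eq_conj hζabs]
    rfl
  have expand : ∀ (M : Matrix (Fin n) (Fin n) ℂ) (l : ℕ),
      star (v l) ⬝ᵥ (M *ᵥ v l)
        = ∑ k ∈ range (N+1), ∑ j ∈ range (N+1),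
            ζ ^ (-((l:ℤ) * k)) * ζ ^ ((l:ℤ)*j) * (star (w k) ⬝ᵥ (M *ᵥ w j)) := by
    intro M l
    have h1 : M *ᵥ v l = ∑ j ∈ range (N+1), ζ^((l:ℤ)*j) • (M *ᵥ w j) := by
      rw [hv]
      simp only
      rw [show (M *ᵥ ∑ j ∈ range (N+1), ζ ^ ((l:ℤ)*(j:ℕ)) • w j)
          = ∑ j ∈ range (N+1), M *ᵥ (ζ ^ ((l:ℤ)*(j:ℕ)) • w j) from
        map_sum M.mulVecLin _ _]
      exact Finset.sum_congr rfl fun j _ => mulVec_smul M _ (w j)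
    have h2 : star (v l) = ∑ k ∈ range (N+1), ζ ^ (-((l:ℤ)*k)) • star (w k) := by
      rw [hv]
      simp only
      rw [star_sum]
      exact Finset.sum_congr rfl fun k _ => by rw [star_smul, starz]
    rw [h1, h2, dot_sum_left]
    refine Finset.sum_congr rfl fun k _ => ?_
    rw [smul_dotProduct, dot_sum_right, smul_eq_mul, Finset.mul_sum]
    refine Finset.sum_congr rfl fun j _ => ?_
    rw [dotProduct_smul, smul_eq_mul]
    ring
  have keysum : ∀ (M : Matrix (Fin n) (Fin n) ℂ) (t : ℕ), t ≤ 1 →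
      ∑ l ∈ range L, ζ ^ ((l:ℤ) * t) * (star (v l) ⬝ᵥ (M *ᵥ v l))
        = (L:ℂ) * ∑ j ∈ range (N+1-t), star (w (j+t)) ⬝ᵥ (M *ᵥ w j) := by
    intro M t ht
    have step1 : ∀ l ∈ range L, ζ ^ ((l:ℤ)*t) * (star (v l) ⬝ᵥ (M *ᵥ v l))
        = ∑ k ∈ range (N+1), ∑ j ∈ range (N+1),
            ζ ^ ((l:ℤ)*((t:ℤ) + j - k)) * (star (w k) ⬝ᵥ (M *ᵥ w j)) := by
      intro l _
      rw [expand M l, Finset.mul_sum]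
      refine Finset.sum_congr rfl fun k _ => ?_
      rw [Finset.mul_sum]
      refine Finset.sum_congr rfl fun j _ => ?_
      rw [show ζ ^ ((l:ℤ)*t) * (ζ ^ (-((l:ℤ)*k)) * ζ ^ ((l:ℤ)*j) * (star (w k) ⬝ᵥ (M *ᵥ w j)))
          = (ζ ^ ((l:ℤ)*t) * ζ ^ (-((l:ℤ)*k)) * ζ ^ ((l:ℤ)*j)) * (star (w k) ⬝ᵥ (M *ᵥ w j))
          from by ring,
        ← zpow_add₀ hζ0, ← zpow_add₀ hζ0,
        show (l:ℤ)*t + -((l:ℤ)*k) + (l:ℤ)*j = (l:ℤ)*((t:ℤ) + j - k) from by ring]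
    rw [Finset.sum_congr rfl step1]
    rw [Finset.sum_comm]
    have swap2 : ∀ k ∈ range (N+1),
        (∑ l ∈ range L, ∑ j ∈ range (N+1),
            ζ ^ ((l:ℤ)*((t:ℤ) + j - k)) * (star (w k) ⬝ᵥ (M *ᵥ w j)))
        = ∑ j ∈ range (N+1),
            (if (L:ℤ) ∣ ((t:ℤ) + j - k) then (L:ℂ) else 0) * (star (w k) ⬝ᵥ (M *ᵥ w j)) := by
      intro k _
      rw [Finset.sum_comm]
      refine Finset.sum_congr rfl fun j _ => ?_
      rw [← Finset.sum_mul, rootsum]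
    rw [Finset.sum_congr rfl swap2, Finset.sum_comm]
    have collapse : ∀ j ∈ range (N+1),
        (∑ k ∈ range (N+1),
            (if (L:ℤ) ∣ ((t:ℤ) + j - k) then (L:ℂ) else 0) * (star (w k) ⬝ᵥ (M *ᵥ w j)))
        = (if j + t ∈ range (N+1) then (L:ℂ) * (star (w (j+t)) ⬝ᵥ (M *ᵥ w j)) else 0) := by
      intro j hj
      simp only [mem_range] at hj
      rw [show (∑ k ∈ range (N+1),
            (if (L:ℤ) ∣ ((t:ℤ) + j - k) then (L:ℂ) else 0) * (star (w k) ⬝ᵥ (M *ᵥ w j)))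
          = ∑ k ∈ range (N+1),
            (if k = j + t then (L:ℂ) * (star (w k) ⬝ᵥ (M *ᵥ w j)) else 0) from ?_]
      · rw [Finset.sum_ite_eq' (range (N+1)) (j+t)
          (fun k => (L:ℂ) * (star (w k) ⬝ᵥ (M *ᵥ w j)))]
      · refine Finset.sum_congr rfl fun k hk => ?_
        simp only [mem_range] at hk
        have hcond : ((L:ℤ) ∣ ((t:ℤ) + j - k)) ↔ k = j + t := by
          constructor
          · intro hdvd
            have hz := Int.eq_zero_of_abs_lt_dvd hdvd (by
              rw [abs_lt]; constructor <;> [push_cast; push_cast] <;> omega)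
            omega
          · rintro rfl
            push_cast
            simp [show (t:ℤ) + j - (j + t) = 0 from by ring]
        by_cases hcase : k = j + t
        · rw [if_pos ((hcond).mpr hcase), if_pos hcase, hcase]
        · rw [if_neg (fun hc => hcase (hcond.mp hc)), if_neg hcase, zero_mul]
    rw [Finset.sum_congr rfl collapse, ← Finset.sum_filter]
    rw [show (range (N+1)).filter (fun j => j + t ∈ range (N+1)) = range (N+1-t) from ?_]
    · rw [Finset.mul_sum]
    · ext j
      simp only [mem_filter, mem_range]
      omega
  -- pointwise positivity
  have hpoint : ∀ l ∈ range L,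
      2 * (ζ ^ ((l:ℤ) * ((1:ℕ):ℤ)) * (star (v l) ⬝ᵥ (A *ᵥ v l))).re
        ≤ (ζ ^ ((l:ℤ) * ((0:ℕ):ℤ)) * (star (v l) ⬝ᵥ ((1 : Matrix (Fin n) (Fin n) ℂ) *ᵥ v l))).re := by
    intro l _
    rw [show ((0:ℕ):ℤ) = 0 from rfl, mul_zero, zpow_zero, one_mul, one_mulVec]
    have habs : ‖ζ ^ ((l:ℤ) * ((1:ℕ):ℤ)) * (star (v l) ⬝ᵥ (A *ᵥ v l))‖
        = ‖star (v l) ⬝ᵥ (A *ᵥ v l)‖ := by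
      rw [norm_mul, norm_zpow, hζabs, _root_.one_zpow, one_mul]
    have h1 : (ζ ^ ((l:ℤ) * ((1:ℕ):ℤ)) * (star (v l) ⬝ᵥ (A *ᵥ v l))).re
        ≤ ‖star (v l) ⬝ᵥ (A *ᵥ v l)‖ := by
      rw [← habs]; exact Complex.re_le_norm _
    have h2 := hw (v l)
    linarith
  have hsum := Finset.sum_le_sum hpoint
  have e1 : ∑ l ∈ range L, 2 * (ζ ^ ((l:ℤ) * ((1:ℕ):ℤ)) * (star (v l) ⬝ᵥ (A *ᵥ v l))).re
      = 2 * ((L:ℝ) * ∑ j ∈ range N, (star (w (j+1)) ⬝ᵥ (A *ᵥ w j)).re) := by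
    rw [← Finset.mul_sum, ← Complex.re_sum, keysum A 1 le_rfl]
    congr 1
    rw [show ((L:ℕ):ℂ) = ((L:ℝ):ℂ) from by norm_cast]
    rw [Complex.re_ofReal_mul, Complex.re_sum]
    norm_num
  have e0 : ∑ l ∈ range L, (ζ ^ ((l:ℤ) * ((0:ℕ):ℤ))
        * (star (v l) ⬝ᵥ ((1 : Matrix (Fin n) (Fin n) ℂ) *ᵥ v l))).re
      = (L:ℝ) * ∑ j ∈ range (N+1), (star (w j) ⬝ᵥ (w j)).re := by
    rw [← Complex.re_sum, keysum 1 0 (Nat.zero_le 1)]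
    rw [show ((L:ℕ):ℂ) = ((L:ℝ):ℂ) from by norm_cast]
    rw [Complex.re_ofReal_mul, Complex.re_sum]
    congr 1
    refine Finset.sum_congr (by norm_num) fun j _ => ?_
    rw [one_mulVec, Nat.add_zero]
  rw [e1, e0] at hsum
  have hLpos : (0:ℝ) < (L:ℝ) := by positivity
  rw [show 2 * ((L:ℝ) * ∑ j ∈ range N, (star (w (j+1)) ⬝ᵥ (A *ᵥ w j)).re)
      = (L:ℝ) * (2 * ∑ j ∈ range N, (star (w (j+1)) ⬝ᵥ (A *ᵥ w j)).re) from by ring] at hsum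
  exact le_of_mul_le_mul_left hsum hLpos


/-- The iteration `X₀ = 1`, `X_{m+1} = 1 - Aᴴ X_m⁻¹ A`. -/
noncomputable def iter (A : Matrix (Fin n) (Fin n) ℂ) : ℕ → Matrix (Fin n) (Fin n) ℂ
  | 0 => 1
  | (m+1) => 1 - Aᴴ * (iter A m)⁻¹ * A

lemma iter_isHermitian (A : Matrix (Fin n) (Fin n) ℂ) : ∀ m, (iter A m).IsHermitian
  | 0 => isHermitian_one
  | (m+1) => by
    rw [iter]
    exact isHermitian_one.sub (isHermitian_conjTranspose_mul_mul A (iter_isHermitian A m).inv)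

/-- The chain of vectors `u₀ = u`, `u_{j+1} = X_{m-j}⁻¹ A u_j`. -/
noncomputable def chain (A : Matrix (Fin n) (Fin n) ℂ) (m : ℕ) (u : Fin n → ℂ) :
    ℕ → (Fin n → ℂ)
  | 0 => u
  | (j+1) => (iter A (m - j))⁻¹ *ᵥ (A *ᵥ chain A m u j)

lemma onestep {A Y : Matrix (Fin n) (Fin n) ℂ} (hY : Y.PosDef) (u : Fin n → ℂ) :
    (star u ⬝ᵥ ((1 - Aᴴ * Y⁻¹ * A) *ᵥ u)).re
      = (star u ⬝ᵥ u).re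
        - 2 * (star (Y⁻¹ *ᵥ (A *ᵥ u)) ⬝ᵥ (A *ᵥ u)).re
        + (star (Y⁻¹ *ᵥ (A *ᵥ u)) ⬝ᵥ (Y *ᵥ (Y⁻¹ *ᵥ (A *ᵥ u)))).re := by
  have hYu : IsUnit Y.det := hY.det_pos.ne'.isUnit
  set v := Y⁻¹ *ᵥ (A *ᵥ u) with hv
  have h1 : Y *ᵥ v = A *ᵥ u := by
    rw [hv, mulVec_mulVec, Matrix.mul_nonsing_inv Y hYu, one_mulVec]
  have h2 : star u ⬝ᵥ ((Aᴴ * Y⁻¹ * A) *ᵥ u) = star (A *ᵥ u) ⬝ᵥ v := by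
    rw [← mulVec_mulVec, ← mulVec_mulVec, dotProduct_mulVec, ← star_mulVec]
  have h3 : star (A *ᵥ u) ⬝ᵥ v = star (star (star (A *ᵥ u) ⬝ᵥ v)) := by
    rw [star_star]
  have h4 : star (star (A *ᵥ u) ⬝ᵥ v) = star v ⬝ᵥ (A *ᵥ u) := by
    rw [Matrix.star_dotProduct, star_star]
  have h5 : (star (A *ᵥ u) ⬝ᵥ v).re = (star v ⬝ᵥ (A *ᵥ u)).re := by
    rw [h3, h4]
    simp [Complex.star_def]
  rw [sub_mulVec, dotProduct_sub, one_mulVec, Complex.sub_re, h2, h5, h1]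
  ring

lemma chain_shift (A : Matrix (Fin n) (Fin n) ℂ) (m : ℕ) (u : Fin n → ℂ) :
    ∀ j, chain A (m+1) u (j+1) = chain A m ((iter A (m+1))⁻¹ *ᵥ (A *ᵥ u)) j
  | 0 => rfl
  | (j+1) => by
    show (iter A (m + 1 - (j+1)))⁻¹ *ᵥ (A *ᵥ chain A (m+1) u (j+1))
      = chain A m ((iter A (m+1))⁻¹ *ᵥ (A *ᵥ u)) (j+1)
    rw [show m + 1 - (j + 1) = m - j from by omega, chain_shift A m u j]
    rfl

lemma unroll {A : Matrix (Fin n) (Fin n) ℂ} :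
    ∀ (m : ℕ), (∀ k ≤ m, (iter A k).PosDef) → ∀ (u : Fin n → ℂ),
    (star u ⬝ᵥ ((iter A (m+1)) *ᵥ u)).re
      = ∑ j ∈ range (m+2), (star (chain A m u j) ⬝ᵥ (chain A m u j)).re
        - 2 * ∑ j ∈ range (m+1),
            (star (chain A m u (j+1)) ⬝ᵥ (A *ᵥ chain A m u j)).re := by
  intro m
  induction m with
  | zero =>
    intro h u
    have h0 : (iter A 0) = 1 := rfl
    have h1 : (star u ⬝ᵥ ((iter A 1) *ᵥ u)).re
        = (star u ⬝ᵥ u).re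
          - 2 * (star ((iter A 0)⁻¹ *ᵥ (A *ᵥ u)) ⬝ᵥ (A *ᵥ u)).re
          + (star ((iter A 0)⁻¹ *ᵥ (A *ᵥ u)) ⬝ᵥ ((iter A 0) *ᵥ ((iter A 0)⁻¹ *ᵥ (A *ᵥ u)))).re :=
      onestep (h 0 le_rfl) u
    have hc0 : chain A 0 u 0 = u := rfl
    have hc1 : chain A 0 u 1 = (iter A 0)⁻¹ *ᵥ (A *ᵥ u) := rfl
    rw [Finset.sum_range_succ, Finset.sum_range_succ, Finset.sum_range_zero,
      Finset.sum_range_one, hc0, hc1, h1, h0]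
    rw [show ((1 : Matrix (Fin n) (Fin n) ℂ))⁻¹ = 1 from inv_one]
    simp only [one_mulVec]
    ring
  | succ m ih =>
    intro h u
    set v := (iter A (m+1))⁻¹ *ᵥ (A *ᵥ u) with hvdef
    have hstep : (star u ⬝ᵥ ((iter A (m+1+1)) *ᵥ u)).re
        = (star u ⬝ᵥ u).re - 2 * (star v ⬝ᵥ (A *ᵥ u)).re
          + (star v ⬝ᵥ ((iter A (m+1)) *ᵥ v)).re := onestep (h (m+1) le_rfl) u
    have hih := ih (fun k hk => h k (le_trans hk (Nat.le_succ m))) v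
    have hdiag : ∑ j ∈ range (m+1+2),
          (star (chain A (m+1) u j) ⬝ᵥ (chain A (m+1) u j)).re
        = (star u ⬝ᵥ u).re
          + ∑ j ∈ range (m+2), (star (chain A m v j) ⬝ᵥ (chain A m v j)).re := by
      rw [show m+1+2 = m+2+1 from rfl,
        Finset.sum_range_succ'
          (fun j => (star (chain A (m+1) u j) ⬝ᵥ (chain A (m+1) u j)).re) (m+2), add_comm]
      congr 1
      refine Finset.sum_congr rfl fun j _ => ?_
      rw [chain_shift A m u j]
    have hcross : ∑ j ∈ range (m+1+1),
          (star (chain A (m+1) u (j+1)) ⬝ᵥ (A *ᵥ chain A (m+1) u j)).re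
        = (star v ⬝ᵥ (A *ᵥ u)).re
          + ∑ j ∈ range (m+1),
              (star (chain A m v (j+1)) ⬝ᵥ (A *ᵥ chain A m v j)).re := by
      rw [Finset.sum_range_succ'
          (fun j => (star (chain A (m+1) u (j+1)) ⬝ᵥ (A *ᵥ chain A (m+1) u j)).re) (m+1),
        add_comm]
      congr 1
      refine Finset.sum_congr rfl fun j _ => ?_
      rw [chain_shift A m u (j+1), chain_shift A m u j]
    rw [hdiag, hcross, hstep, hih]
    ring

lemma dot_mul_conjTranspose (A : Matrix (Fin n) (Fin n) ℂ) (u : Fin n → ℂ) :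
    star u ⬝ᵥ ((A * Aᴴ) *ᵥ u) = star (Aᴴ *ᵥ u) ⬝ᵥ (Aᴴ *ᵥ u) := by
  rw [← mulVec_mulVec, dotProduct_mulVec, ← conjTranspose_conjTranspose A, ← star_mulVec,
    conjTranspose_conjTranspose]

lemma iter_posdef {A : Matrix (Fin n) (Fin n) ℂ} (hA : IsUnit A.det)
    (hw : ∀ u : Fin n → ℂ, ‖star u ⬝ᵥ (A *ᵥ u)‖ ≤ (1/2) * (star u ⬝ᵥ u).re) :
    ∀ m, (iter A m).PosDef ∧ ((iter A m) - A * Aᴴ).PosSemidef := by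
  have hAAH : (A * Aᴴ).PosDef := mul_conjTranspose_self_posDef hA
  intro m
  induction m using Nat.strong_induction_on with
  | _ m ih =>
    have hherm : (iter A m).IsHermitian := iter_isHermitian A m
    have hpsd : ((iter A m) - A * Aᴴ).PosSemidef := by
      refine posSemidef_of_re (hherm.sub hAAH.isHermitian) (fun u => ?_)
      have hgoal : (star u ⬝ᵥ (((iter A m) - A * Aᴴ) *ᵥ u)).re
          = (star u ⬝ᵥ ((iter A m) *ᵥ u)).re - (star u ⬝ᵥ ((A * Aᴴ) *ᵥ u)).re := by
        rw [sub_mulVec, dotProduct_sub, Complex.sub_re]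
      rw [hgoal]
      cases m with
      | zero =>
        set w : ℕ → Fin n → ℂ :=
          fun j => if j = 0 then Aᴴ *ᵥ u else if j = 1 then u else 0 with hwdef
        have t := toeplitz_nonneg hw 1 w
        rw [Finset.sum_range_one, Finset.sum_range_succ, Finset.sum_range_one] at t
        have e1 : (star (w 1) ⬝ᵥ (A *ᵥ w 0)).re = (star u ⬝ᵥ ((A * Aᴴ) *ᵥ u)).re := by
          show (star u ⬝ᵥ (A *ᵥ (Aᴴ *ᵥ u))).re = _
          rw [mulVec_mulVec]
        have e2 : (star (w 0) ⬝ᵥ (w 0)).re = (star u ⬝ᵥ ((A * Aᴴ) *ᵥ u)).re := by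
          show (star (Aᴴ *ᵥ u) ⬝ᵥ (Aᴴ *ᵥ u)).re = _
          rw [dot_mul_conjTranspose]
        have e3 : (star (w 1) ⬝ᵥ (w 1)).re = (star u ⬝ᵥ u).re := rfl
        rw [e1, e2, e3] at t
        have e4 : (star u ⬝ᵥ ((iter A 0) *ᵥ u)).re = (star u ⬝ᵥ u).re := by
          show (star u ⬝ᵥ ((1 : Matrix (Fin n) (Fin n) ℂ) *ᵥ u)).re = _
          rw [one_mulVec]
        rw [e4]
        linarith
      | succ m =>
        have hPD : ∀ k ≤ m, (iter A k).PosDef := fun k hk => (ih k (by omega)).1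
        have hun := unroll m hPD u
        set w : ℕ → Fin n → ℂ := fun j => Nat.casesOn j (Aᴴ *ᵥ u) (chain A m u) with hwdef
        have t := toeplitz_nonneg hw (m+2) w
        have hcrossid : ∑ j ∈ range (m+2), (star (w (j+1)) ⬝ᵥ (A *ᵥ w j)).re
            = (star u ⬝ᵥ ((A * Aᴴ) *ᵥ u)).re
              + ∑ j ∈ range (m+1),
                  (star (chain A m u (j+1)) ⬝ᵥ (A *ᵥ chain A m u j)).re := by
          rw [show m+2 = (m+1)+1 from rfl,
            Finset.sum_range_succ' (fun j => (star (w (j+1)) ⬝ᵥ (A *ᵥ w j)).re) (m+1),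
            add_comm]
          congr 1
          show (star u ⬝ᵥ (A *ᵥ (Aᴴ *ᵥ u))).re = _
          rw [mulVec_mulVec]
        have hdiagid : ∑ j ∈ range (m+2+1), (star (w j) ⬝ᵥ (w j)).re
            = (star u ⬝ᵥ ((A * Aᴴ) *ᵥ u)).re
              + ∑ j ∈ range (m+2), (star (chain A m u j) ⬝ᵥ (chain A m u j)).re := by
          rw [Finset.sum_range_succ' (fun j => (star (w j) ⬝ᵥ (w j)).re) (m+2), add_comm]
          congr 1
          show (star (Aᴴ *ᵥ u) ⬝ᵥ (Aᴴ *ᵥ u)).re = _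
          rw [dot_mul_conjTranspose]
        rw [hcrossid, hdiagid] at t
        rw [hun]
        linarith
    have hpd : (iter A m).PosDef := by
      have e : A * Aᴴ + ((iter A m) - A * Aᴴ) = iter A m := by abel
      exact e ▸ (hAAH.add_posSemidef hpsd)
    exact ⟨hpd, hpsd⟩

lemma iter_antitone {A : Matrix (Fin n) (Fin n) ℂ} (hA : IsUnit A.det)
    (hw : ∀ u : Fin n → ℂ, ‖star u ⬝ᵥ (A *ᵥ u)‖ ≤ (1/2) * (star u ⬝ᵥ u).re) :
    ∀ m, ((iter A m) - (iter A (m+1))).PosSemidef := by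
  intro m
  induction m with
  | zero =>
    have e : (iter A 0) - (iter A 1) = Aᴴ * A := by
      show (1 : Matrix (Fin n) (Fin n) ℂ) - (1 - Aᴴ * (1 : Matrix (Fin n) (Fin n) ℂ)⁻¹ * A) = _
      rw [inv_one, Matrix.mul_one]
      abel
    rw [e]
    exact posSemidef_conjTranspose_mul_self A
  | succ m ihm =>
    have h1 : (iter A (m+1)) - (iter A (m+1+1))
        = Aᴴ * ((iter A (m+1))⁻¹ - (iter A m)⁻¹) * A := by
      show (1 - Aᴴ * (iter A m)⁻¹ * A) - (1 - Aᴴ * (iter A (m+1))⁻¹ * A) = _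
      rw [Matrix.mul_sub, Matrix.sub_mul]
      abel
    rw [h1]
    have h2 : ((iter A (m+1))⁻¹ - (iter A m)⁻¹).PosSemidef :=
      inv_antitone (iter_posdef hA hw (m+1)).1 (iter_posdef hA hw m).1 ihm
    exact h2.conjTranspose_mul_mul_same A

lemma form_eq_sum (Y : Matrix (Fin n) (Fin n) ℂ) (u : Fin n → ℂ) :
    star u ⬝ᵥ (Y *ᵥ u) = ∑ i, ∑ j, star (u i) * Y i j * u j := by
  simp [dotProduct, mulVec, Finset.mul_sum, mul_assoc]

lemma polar (Y : Matrix (Fin n) (Fin n) ℂ) (x y : Fin n → ℂ) :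
    star x ⬝ᵥ (Y *ᵥ y)
      = ((star (x+y) ⬝ᵥ (Y *ᵥ (x+y))) - (star (x-y) ⬝ᵥ (Y *ᵥ (x-y)))
        - Complex.I * ((star (x + Complex.I • y) ⬝ᵥ (Y *ᵥ (x + Complex.I • y)))
          - (star (x - Complex.I • y) ⬝ᵥ (Y *ᵥ (x - Complex.I • y))))) / 4 := by
  set a := star x ⬝ᵥ (Y *ᵥ x)
  set b := star x ⬝ᵥ (Y *ᵥ y)
  set c := star y ⬝ᵥ (Y *ᵥ x)
  set d := star y ⬝ᵥ (Y *ᵥ y)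
  have hsmul : ∀ (t : ℂ) (u v : Fin n → ℂ), star u ⬝ᵥ (Y *ᵥ (t • v)) = t * (star u ⬝ᵥ (Y *ᵥ v)) := by
    intro t u v
    rw [mulVec_smul, dotProduct_smul, smul_eq_mul]
  have hsmul' : ∀ (t : ℂ) (u v : Fin n → ℂ),
      star (t • u) ⬝ᵥ (Y *ᵥ v) = star t * (star u ⬝ᵥ (Y *ᵥ v)) := by
    intro t u v
    rw [star_smul, smul_dotProduct, smul_eq_mul]
  have e1 : star (x+y) ⬝ᵥ (Y *ᵥ (x+y)) = a + b + c + d := by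
    rw [star_add, add_dotProduct, mulVec_add, dotProduct_add, dotProduct_add]
    ring
  have e2 : star (x-y) ⬝ᵥ (Y *ᵥ (x-y)) = a - b - c + d := by
    rw [sub_eq_add_neg, ← neg_one_smul ℂ y]
    rw [star_add, add_dotProduct, mulVec_add, dotProduct_add, dotProduct_add]
    rw [hsmul, hsmul', hsmul, hsmul']
    simp only [star_neg, star_one]
    ring
  have e3 : star (x + Complex.I • y) ⬝ᵥ (Y *ᵥ (x + Complex.I • y))
      = a + Complex.I * b - Complex.I * c + d := by
    rw [star_add, add_dotProduct, mulVec_add, dotProduct_add, dotProduct_add]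
    rw [hsmul, hsmul', hsmul, hsmul']
    rw [Complex.star_def, Complex.conj_I]
    ring_nf
    rw [Complex.I_sq]
    ring
  have e4 : star (x - Complex.I • y) ⬝ᵥ (Y *ᵥ (x - Complex.I • y))
      = a - Complex.I * b + Complex.I * c + d := by
    rw [sub_eq_add_neg, ← neg_smul]
    rw [star_add, add_dotProduct, mulVec_add, dotProduct_add, dotProduct_add]
    rw [hsmul, hsmul', hsmul, hsmul']
    rw [Complex.star_def, map_neg, Complex.conj_I]
    ring_nf
    rw [Complex.I_sq]
    ring
  rw [e1, e2, e3, e4]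
  ring_nf
  rw [Complex.I_sq]
  ring

/-- Existence of a positive definite solution of `X + Aᴴ X⁻¹ A = 1` when the numerical radius
of `A` is at most `1/2` and `A` is invertible. -/
lemma exists_solution_normalized {A : Matrix (Fin n) (Fin n) ℂ} (hA : IsUnit A.det)
    (hw : ∀ u : Fin n → ℂ, ‖star u ⬝ᵥ (A *ᵥ u)‖ ≤ (1/2) * (star u ⬝ᵥ u).re) :
    ∃ X : Matrix (Fin n) (Fin n) ℂ, X.PosDef ∧ X + Aᴴ * X⁻¹ * A = 1 := by
  have hAAH : (A * Aᴴ).PosDef := mul_conjTranspose_self_posDef hA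
  -- the quadratic forms converge
  have hqconv : ∀ u : Fin n → ℂ, ∃ cu : ℝ,
      Tendsto (fun m => (star u ⬝ᵥ ((iter A m) *ᵥ u)).re) atTop (𝓝 cu) := by
    intro u
    have hanti : Antitone (fun m => (star u ⬝ᵥ ((iter A m) *ᵥ u)).re) := by
      apply antitone_nat_of_succ_le
      intro m
      have := psd_re_nonneg (iter_antitone hA hw m) u
      rw [sub_mulVec, dotProduct_sub, Complex.sub_re] at this
      linarith
    have hbdd : BddBelow (Set.range (fun m => (star u ⬝ᵥ ((iter A m) *ᵥ u)).re)) := by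
      refine ⟨0, fun r hr => ?_⟩
      obtain ⟨m, rfl⟩ := hr
      exact psd_re_nonneg (iter_posdef hA hw m).1.posSemidef u
    exact ⟨_, tendsto_atTop_ciInf hanti hbdd⟩
  have hqconvC : ∀ u : Fin n → ℂ, ∃ cu : ℂ,
      Tendsto (fun m => star u ⬝ᵥ ((iter A m) *ᵥ u)) atTop (𝓝 cu) := by
    intro u
    obtain ⟨cu, hcu⟩ := hqconv u
    refine ⟨(cu : ℂ), ?_⟩
    have : (fun m => star u ⬝ᵥ ((iter A m) *ᵥ u))
        = fun m => (((star u ⬝ᵥ ((iter A m) *ᵥ u)).re : ℝ) : ℂ) := by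
      funext m
      exact herm_form_real (iter_isHermitian A m) u
    rw [this]
    exact (Complex.continuous_ofReal.tendsto _).comp hcu
  -- entrywise limits exist
  have hE : ∀ i j : Fin n, ∃ c : ℂ, Tendsto (fun m => iter A m i j) atTop (𝓝 c) := by
    intro i j
    have hentry : ∀ m, iter A m i j
        = star (Pi.single i 1) ⬝ᵥ ((iter A m) *ᵥ (Pi.single j 1)) := by
      intro m
      rw [mulVec_single]
      simp [dotProduct, Pi.single_apply, apply_ite (star : ℂ → ℂ)]
    set p : Fin n → ℂ := Pi.single i 1 with hp
    set q : Fin n → ℂ := Pi.single j 1 with hq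
    obtain ⟨c1, h1⟩ := hqconvC (p + q)
    obtain ⟨c2, h2⟩ := hqconvC (p - q)
    obtain ⟨c3, h3⟩ := hqconvC (p + Complex.I • q)
    obtain ⟨c4, h4⟩ := hqconvC (p - Complex.I • q)
    refine ⟨(c1 - c2 - Complex.I * (c3 - c4)) / 4, ?_⟩
    have heq : (fun m => iter A m i j) = fun m =>
        ((star (p + q) ⬝ᵥ ((iter A m) *ᵥ (p + q)))
          - (star (p - q) ⬝ᵥ ((iter A m) *ᵥ (p - q)))
          - Complex.I * ((star (p + Complex.I • q) ⬝ᵥ ((iter A m) *ᵥ (p + Complex.I • q)))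
            - (star (p - Complex.I • q) ⬝ᵥ ((iter A m) *ᵥ (p - Complex.I • q))))) / 4 := by
      funext m
      rw [hentry m, polar]
    rw [heq]
    exact (((h1.sub h2).sub (tendsto_const_nhds.mul (h3.sub h4))).div_const 4)
  choose Xf hXf using hE
  set X : Matrix (Fin n) (Fin n) ℂ := Matrix.of Xf with hXdef
  have hXtends : Tendsto (fun m => iter A m) atTop (𝓝 X) := by
    apply tendsto_pi_nhds.2
    intro i
    rw [tendsto_pi_nhds]
    intro j
    exact hXf i j
  -- forms converge to the form of X
  have hform : ∀ u : Fin n → ℂ,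
      Tendsto (fun m => star u ⬝ᵥ ((iter A m) *ᵥ u)) atTop (𝓝 (star u ⬝ᵥ (X *ᵥ u))) := by
    intro u
    have : ∀ Y : Matrix (Fin n) (Fin n) ℂ, star u ⬝ᵥ (Y *ᵥ u) = ∑ i, ∑ j, star (u i) * Y i j * u j :=
      fun Y => form_eq_sum Y u
    simp_rw [this]
    refine tendsto_finset_sum _ (fun i _ => tendsto_finset_sum _ (fun j _ => ?_))
    exact (tendsto_const_nhds.mul (hXf i j)).mul tendsto_const_nhds
  -- X is Hermitian
  have hXherm : X.IsHermitian := by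
    refine Matrix.ext (fun i j => ?_)
    rw [conjTranspose_apply]
    have h1 : Tendsto (fun m => star (iter A m j i)) atTop (𝓝 (star (X j i))) :=
      (Complex.continuous_conj.tendsto _).comp (hXf j i)
    have h2 : (fun m => star (iter A m j i)) = fun m => iter A m i j := by
      funext m
      rw [← conjTranspose_apply, (iter_isHermitian A m).eq]
    rw [h2] at h1
    exact tendsto_nhds_unique h1 (hXf i j)
  -- X - A Aᴴ is PSD
  have hXlow : (X - A * Aᴴ).PosSemidef := by
    refine posSemidef_of_re (hXherm.sub hAAH.isHermitian) (fun u => ?_)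
    have h1 : Tendsto (fun m => (star u ⬝ᵥ (((iter A m) - A * Aᴴ) *ᵥ u)).re) atTop
        (𝓝 ((star u ⬝ᵥ ((X - A * Aᴴ) *ᵥ u)).re)) := by
      have e : ∀ (Y : Matrix (Fin n) (Fin n) ℂ),
          (star u ⬝ᵥ ((Y - A * Aᴴ) *ᵥ u)).re
            = (star u ⬝ᵥ (Y *ᵥ u)).re - (star u ⬝ᵥ ((A * Aᴴ) *ᵥ u)).re := by
        intro Y
        rw [sub_mulVec, dotProduct_sub, Complex.sub_re]
      simp_rw [e]
      exact ((Complex.continuous_re.tendsto _).comp (hform u)).sub tendsto_const_nhds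
    exact ge_of_tendsto' h1 (fun m => psd_re_nonneg (iter_posdef hA hw m).2 u)
  have hXpd : X.PosDef := by
    have e : A * Aᴴ + (X - A * Aᴴ) = X := by abel
    exact e ▸ (hAAH.add_posSemidef hXlow)
  -- inverses converge
  have hdetX : IsUnit X.det := hXpd.det_pos.ne'.isUnit
  have hinvtends : Tendsto (fun m => (iter A m)⁻¹) atTop (𝓝 X⁻¹) := by
    have hdet : Tendsto (fun m => (iter A m).det) atTop (𝓝 X.det) :=
      ((continuous_id.matrix_det).tendsto X).comp hXtends
    have hadj : Tendsto (fun m => (iter A m).adjugate) atTop (𝓝 X.adjugate) :=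
      ((continuous_id.matrix_adjugate).tendsto X).comp hXtends
    have hdinv : Tendsto (fun m => ((iter A m).det)⁻¹) atTop (𝓝 (X.det)⁻¹) :=
      hdet.inv₀ (hXpd.det_pos.ne')
    have : (fun m => (iter A m)⁻¹) = fun m => ((iter A m).det)⁻¹ • (iter A m).adjugate := by
      funext m
      rw [Matrix.inv_def, Ring.inverse_eq_inv]
    rw [this, Matrix.inv_def, Ring.inverse_eq_inv]
    exact hdinv.smul hadj
  -- pass to the limit in the recursion
  have hrec : Tendsto (fun m => iter A (m+1)) atTop (𝓝 (1 - Aᴴ * X⁻¹ * A)) := by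
    have : (fun m => iter A (m+1)) = fun m => 1 - Aᴴ * (iter A m)⁻¹ * A := rfl
    rw [this]
    have hmul : Tendsto (fun m => Aᴴ * (iter A m)⁻¹ * A) atTop (𝓝 (Aᴴ * X⁻¹ * A)) := by
      have hc : Continuous (fun Y : Matrix (Fin n) (Fin n) ℂ => Aᴴ * Y * A) :=
        (continuous_const.matrix_mul continuous_id).matrix_mul continuous_const
      exact (hc.tendsto _).comp hinvtends
    exact tendsto_const_nhds.sub hmul
  have hshift : Tendsto (fun m => iter A (m+1)) atTop (𝓝 X) :=
    hXtends.comp (tendsto_add_atTop_nat 1)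
  have hfix : X = 1 - Aᴴ * X⁻¹ * A := tendsto_nhds_unique hshift hrec
  refine ⟨X, hXpd, ?_⟩
  nth_rewrite 1 [hfix]
  abel

lemma posDef_conj {X B : Matrix (Fin n) (Fin n) ℂ} (hX : X.PosDef) (hB : IsUnit B.det) :
    (Bᴴ * X * B).PosDef := by
  refine PosDef.of_dotProduct_mulVec_pos (isHermitian_conjTranspose_mul_mul B hX.isHermitian) (fun x hx => ?_)
  have hinj : Function.Injective B.mulVec :=
    mulVec_injective_iff_isUnit.mpr ((Matrix.isUnit_iff_isUnit_det B).mpr hB)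
  have hBx : B *ᵥ x ≠ 0 := fun hc => hx (hinj (by simpa using hc))
  have he : star x ⬝ᵥ ((Bᴴ * X * B) *ᵥ x) = star (B *ᵥ x) ⬝ᵥ (X *ᵥ (B *ᵥ x)) := by
    rw [← mulVec_mulVec, ← mulVec_mulVec, dotProduct_mulVec, ← star_mulVec]
  rw [he]
  exact hX.dotProduct_mulVec_pos hBx

lemma necessity_normalized {A X : Matrix (Fin n) (Fin n) ℂ} (hX : X.PosDef)
    (heq : X + Aᴴ * X⁻¹ * A = 1) (u : Fin n → ℂ) :
    ‖star u ⬝ᵥ (A *ᵥ u)‖ ≤ (1/2) * (star u ⬝ᵥ u).re := by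
  set S := CFC.sqrt X with hSdef
  have hSH : S.IsHermitian := (CFC.sqrt_nonneg X).posSemidef.1
  have hSS : S * S = X := CFC.sqrt_mul_sqrt_self X hX.posSemidef.nonneg
  have hdetS : IsUnit S.det := by
    rw [isUnit_iff_ne_zero]
    intro hc
    have : X.det = 0 := by rw [← hSS, Matrix.det_mul, hc, mul_zero]
    exact hX.det_pos.ne' this
  have hXinv : X⁻¹ = S⁻¹ * S⁻¹ := by rw [← hSS, Matrix.mul_inv_rev]
  set v := S⁻¹ *ᵥ (A *ᵥ u) with hvdef
  have hrw : star u ⬝ᵥ (A *ᵥ u) = star (S *ᵥ u) ⬝ᵥ v := by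
    rw [← herm_shift hSH, hvdef, mulVec_mulVec, mulVec_mulVec,
      Matrix.mul_nonsing_inv S hdetS, Matrix.one_mul]
  set a := (star (S *ᵥ u) ⬝ᵥ (S *ᵥ u)).re with hadef
  set b := (star v ⬝ᵥ v).re with hbdef
  have ha0 : 0 ≤ a := by
    rw [hadef, star_dot_self, Complex.ofReal_re]
    exact Finset.sum_nonneg fun i _ => Complex.normSq_nonneg _
  have hb0 : 0 ≤ b := by
    rw [hbdef, star_dot_self, Complex.ofReal_re]
    exact Finset.sum_nonneg fun i _ => Complex.normSq_nonneg _
  have hcs : ‖star (S *ᵥ u) ⬝ᵥ v‖ ^ 2 ≤ a * b := by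
    have := psd_cs (Matrix.PosSemidef.one (n := Fin n) (R := ℂ)) (S *ᵥ u) v
    simpa only [one_mulVec] using this
  -- a + b = re (star u ⬝ᵥ u)
  have hab : a + b = (star u ⬝ᵥ u).re := by
    have e1 : star (S *ᵥ u) ⬝ᵥ (S *ᵥ u) = star u ⬝ᵥ (X *ᵥ u) := by
      rw [← herm_shift hSH, mulVec_mulVec, hSS]
    have e2 : star v ⬝ᵥ v = star u ⬝ᵥ ((Aᴴ * X⁻¹ * A) *ᵥ u) := by
      rw [hvdef, ← herm_shift hSH.inv (A *ᵥ u) (S⁻¹ *ᵥ (A *ᵥ u)), mulVec_mulVec, ← hXinv,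
        star_mulVec, ← dotProduct_mulVec, mulVec_mulVec, mulVec_mulVec]
    have e3 : star u ⬝ᵥ (X *ᵥ u) + star u ⬝ᵥ ((Aᴴ * X⁻¹ * A) *ᵥ u) = star u ⬝ᵥ u := by
      rw [← dotProduct_add, ← add_mulVec, heq, one_mulVec]
    rw [hadef, hbdef, e1, e2, ← Complex.add_re, e3]
  rw [hrw]
  nlinarith [hcs, sq_nonneg (a - b), norm_nonneg (star (S *ᵥ u) ⬝ᵥ v)]

lemma radius_bdd (A : Matrix (Fin n) (Fin n) ℂ) :
    BddAbove {r : ℝ | ∃ α : Fin n → ℂ,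
      (∑ i, Complex.normSq (α i)) ≤ 1 ∧ r = ‖star α ⬝ᵥ A.mulVec α‖} := by
  refine ⟨∑ i, ∑ j, ‖A i j‖, fun r hr => ?_⟩
  obtain ⟨α, hα, rfl⟩ := hr
  have habs1 : ∀ i, ‖α i‖ ≤ 1 := by
    intro i
    have h1 : Complex.normSq (α i) ≤ 1 :=
      le_trans (Finset.single_le_sum (f := fun i => Complex.normSq (α i))
        (fun i _ => Complex.normSq_nonneg _) (Finset.mem_univ i)) hα
    rw [Complex.normSq_eq_norm_sq] at h1
    nlinarith [norm_nonneg (α i)]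
  show ‖star α ⬝ᵥ (A *ᵥ α)‖ ≤ _
  rw [form_eq_sum]
  refine le_trans (norm_sum_le _ _) (Finset.sum_le_sum fun i _ => ?_)
  refine le_trans (norm_sum_le _ _) (Finset.sum_le_sum fun j _ => ?_)
  rw [norm_mul, norm_mul]
  have h1 : ‖star (α i)‖ = ‖α i‖ := by
    rw [Complex.star_def, Complex.norm_conj]
  rw [h1]
  have := habs1 i
  have := habs1 j
  have h4 := norm_nonneg (A i j)
  calc ‖α i‖ * ‖A i j‖ * ‖α j‖
      ≤ 1 * ‖A i j‖ * 1 := by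
        refine mul_le_mul (mul_le_mul (habs1 i) le_rfl h4 zero_le_one) (habs1 j)
          (norm_nonneg (α j)) (by positivity)
    _ = ‖A i j‖ := by ring

lemma radius_le_iff {A : Matrix (Fin n) (Fin n) ℂ} :
    numRadius A ≤ 1/2
      ↔ ∀ u : Fin n → ℂ, ‖star u ⬝ᵥ (A *ᵥ u)‖ ≤ (1/2) * (star u ⬝ᵥ u).re := by
  constructor
  · intro h u
    by_cases hu : u = 0
    · subst hu
      simp only [star_zero, zero_dotProduct, norm_zero, Complex.zero_re, mul_zero, le_refl]
    · set t := ∑ i, Complex.normSq (u i) with htdef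
      have ht : 0 < t := by
        obtain ⟨i, hi⟩ := Function.ne_iff.mp hu
        refine Finset.sum_pos' (fun i _ => Complex.normSq_nonneg _) ⟨i, Finset.mem_univ i, ?_⟩
        exact Complex.normSq_pos.mpr hi
      set c : ℝ := (Real.sqrt t)⁻¹ with hcdef
      have hc : 0 < c := by
        rw [hcdef]
        exact inv_pos.mpr (Real.sqrt_pos.mpr ht)
      have hct : c^2 * t = 1 := by
        rw [hcdef]
        rw [show ((Real.sqrt t)⁻¹)^2 = ((Real.sqrt t)^2)⁻¹ from by
          rw [inv_pow], Real.sq_sqrt ht.le]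
        exact inv_mul_cancel₀ ht.ne'
      set α := ((c:ℂ)) • u with hαdef
      have hαsum : ∑ i, Complex.normSq (α i) = 1 := by
        rw [hαdef]
        simp only [Pi.smul_apply, smul_eq_mul, Complex.normSq_mul, Complex.normSq_ofReal]
        rw [← Finset.mul_sum, ← htdef, ← hct]
        ring
      have hform : star α ⬝ᵥ (A *ᵥ α) = ((c^2 : ℝ) : ℂ) * (star u ⬝ᵥ (A *ᵥ u)) := by
        rw [hαdef, star_smul, mulVec_smul, smul_dotProduct, dotProduct_smul]
        simp only [smul_eq_mul, Complex.star_def, Complex.conj_ofReal]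
        push_cast
        ring
      have hmem : ‖star α ⬝ᵥ (A *ᵥ α)‖ ∈ {r : ℝ | ∃ β : Fin n → ℂ,
          (∑ i, Complex.normSq (β i)) ≤ 1 ∧ r = ‖star β ⬝ᵥ A.mulVec β‖} :=
        ⟨α, le_of_eq hαsum, rfl⟩
      have hle : ‖star α ⬝ᵥ (A *ᵥ α)‖ ≤ 1/2 :=
        le_trans (le_csSup (radius_bdd A) hmem) h
      rw [hform, norm_mul, Complex.norm_real, Real.norm_of_nonneg (by positivity)] at hle
      have hre : (star u ⬝ᵥ u).re = t := by
        rw [star_dot_self, Complex.ofReal_re]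
      rw [hre]
      -- c^2 * abs ≤ 1/2, c^2 = t⁻¹
      have hc2 : c^2 = t⁻¹ := by
        field_simp at hct ⊢
        linarith
      rw [hc2] at hle
      rw [inv_mul_le_iff₀ ht] at hle
      linarith
  · intro h
    refine Real.sSup_le (fun r hr => ?_) (by norm_num)
    obtain ⟨α, hα, rfl⟩ := hr
    have h1 := h α
    have h2 : (star α ⬝ᵥ α).re = ∑ i, Complex.normSq (α i) := by
      rw [star_dot_self, Complex.ofReal_re]
    rw [h2] at h1
    calc ‖star α ⬝ᵥ A.mulVec α‖ ≤ 1/2 * ∑ i, Complex.normSq (α i) := h1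
      _ ≤ 1/2 * 1 := by linarith
      _ = 1/2 := by norm_num

end RiccatiAux

open RiccatiAux in
/-- Suppose `W` is a nonsingular `n×n` complex matrix and `M` is Hermitian positive definite.
Then the discrete algebraic Riccati-type equation `X + Wᴴ X⁻¹ W = M` has a Hermitian positive
definite solution `X` if and only if `radius(M^{-1/2} W M^{-1/2}) ≤ 1/2`. -/
theorem riccati_posDef_solution_iff {n : ℕ} (W M : Matrix (Fin n) (Fin n) ℂ)
    (hW : IsUnit W.det) (hM : M.PosDef) :
    (∃ X : Matrix (Fin n) (Fin n) ℂ, X.PosDef ∧ X + Wᴴ * X⁻¹ * W = M) ↔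
      numRadius ((CFC.sqrt M)⁻¹ * W * (CFC.sqrt M)⁻¹) ≤ 1 / 2 := by
  set S := CFC.sqrt M with hSdef
  have hSH : S.IsHermitian := (CFC.sqrt_nonneg M).posSemidef.1
  have hSS : S * S = M := CFC.sqrt_mul_sqrt_self M hM.posSemidef.nonneg
  have hdetM : M.det ≠ 0 := hM.det_pos.ne'
  have hdetS : IsUnit S.det := by
    rw [isUnit_iff_ne_zero]
    intro hc
    exact hdetM (by rw [← hSS, Matrix.det_mul, hc, mul_zero])
  set T := S⁻¹ with hTdef
  have hTH : T.IsHermitian := hSH.inv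
  have hTS : T * S = 1 := Matrix.nonsing_inv_mul S hdetS
  have hST : S * T = 1 := Matrix.mul_nonsing_inv S hdetS
  have hdetT : IsUnit T.det := by
    rw [hTdef, Matrix.det_nonsing_inv, Ring.inverse_eq_inv, isUnit_iff_ne_zero]
    exact inv_ne_zero (isUnit_iff_ne_zero.mp hdetS)
  set A := T * W * T with hAdef
  have hdetA : IsUnit A.det := by
    rw [hAdef, Matrix.det_mul, Matrix.det_mul]
    exact (hdetT.mul hW).mul hdetT
  have hAH : Aᴴ = T * Wᴴ * T := by
    rw [hAdef, Matrix.conjTranspose_mul, Matrix.conjTranspose_mul, hTH.eq, ← Matrix.mul_assoc]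
  have cTS : ∀ Z : Matrix (Fin n) (Fin n) ℂ, T * (S * Z) = Z := fun Z => by
    rw [← Matrix.mul_assoc, hTS, Matrix.one_mul]
  have cST : ∀ Z : Matrix (Fin n) (Fin n) ℂ, S * (T * Z) = Z := fun Z => by
    rw [← Matrix.mul_assoc, hST, Matrix.one_mul]
  have hTinv : T⁻¹ = S := Matrix.nonsing_inv_nonsing_inv S hdetS
  constructor
  · rintro ⟨X, hXpd, heqX⟩
    have hdetX : IsUnit X.det := hXpd.det_pos.ne'.isUnit
    set Y := T * X * T with hYdef
    have hYpd : Y.PosDef := by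
      have h := posDef_conj hXpd hdetT
      rwa [hTH.eq] at h
    have hYinv : Y⁻¹ = S * X⁻¹ * S := by
      rw [hYdef, Matrix.mul_inv_rev, Matrix.mul_inv_rev, hTinv, Matrix.mul_assoc]
    have heqY : Y + Aᴴ * Y⁻¹ * A = 1 := by
      rw [hAH, hYinv, hYdef]
      calc T * X * T + T * Wᴴ * T * (S * X⁻¹ * S) * (T * W * T)
          = T * ((X + Wᴴ * X⁻¹ * W) * T) := by
            simp only [Matrix.mul_assoc, Matrix.mul_add, Matrix.add_mul, cTS, cST]
        _ = T * (M * T) := by rw [heqX]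
        _ = 1 := by
            rw [← hSS]
            simp only [Matrix.mul_assoc, cTS, hST]
    exact radius_le_iff.mpr (necessity_normalized hYpd heqY)
  · intro hrad
    have hw := radius_le_iff.mp hrad
    obtain ⟨Y, hYpd, heqY⟩ := exists_solution_normalized hdetA hw
    have hdetY : IsUnit Y.det := hYpd.det_pos.ne'.isUnit
    refine ⟨S * Y * S, ?_, ?_⟩
    · have h := posDef_conj hYpd hdetS
      rwa [hSH.eq] at h
    · have hXinv : (S * Y * S)⁻¹ = T * Y⁻¹ * T := by
        rw [Matrix.mul_inv_rev, Matrix.mul_inv_rev, ← hTdef, Matrix.mul_assoc]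
      rw [hXinv]
      calc S * Y * S + Wᴴ * (T * Y⁻¹ * T) * W
          = S * ((Y + Aᴴ * Y⁻¹ * A) * S) := by
            simp only [hAH, hAdef, Matrix.conjTranspose_mul, hTH.eq, Matrix.mul_assoc,
              Matrix.mul_add, Matrix.add_mul, cTS, cST, hTS, hST, Matrix.mul_one,
              Matrix.one_mul]
        _ = M := by
            rw [heqY, Matrix.one_mul, hSS]
end
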